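/- arXiv:1604.07506 — 2 statements merged into one kernel-verified Lean document; each statement's English description precedes it below -/
import Mathlib

section
/- For a positive integer N, the CDF of a gamma(N,1) random variable is bounded below: for all y ≥ 0, γ(N, y)/Γ(N) ≥ (1 - e^{-κ y})^N, where κ = (N!)^{-1/N}. -/
open MeasureTheory Real Set Filter Topology

private lemma alzer_exp_aux {u : ℝ} (hu : 0 < u) :
    u * Real.exp (-(u / 2)) ≤ 1 - Real.exp (-u) := by
  have h : u / 2 < Real.sinh (u / 2) := Real.self_lt_sinh_iff.2 (by linarith)
  rw [Real.sinh_eq] at h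
  have h1 : Real.exp (u / 2) * Real.exp (-(u / 2)) = 1 := by
    rw [← Real.exp_add]; ring_nf; exact Real.exp_zero
  have h2 : Real.exp (-(u / 2)) * Real.exp (-(u / 2)) = Real.exp (-u) := by
    rw [← Real.exp_add]; ring_nf
  nlinarith [Real.exp_pos (-(u / 2))]

private lemma alzer_inner_pos {u : ℝ} (hu : 0 < u) : 0 < 1 - Real.exp (-u) := by
  have := Real.exp_lt_one_iff.mpr (neg_lt_zero.mpr hu)
  linarith

noncomputable def alzerH (m c : ℝ) : ℝ → ℝ :=
  fun u => m * (Real.log u - Real.log (1 - Real.exp (-u))) - c * u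

noncomputable def alzerH' (m c : ℝ) : ℝ → ℝ :=
  fun u => m * (u⁻¹ - Real.exp (-u) / (1 - Real.exp (-u))) - c

noncomputable def alzerH'' (m : ℝ) : ℝ → ℝ :=
  fun u => m * (Real.exp (-u) / (1 - Real.exp (-u)) ^ 2 - (u ^ 2)⁻¹)

private lemma alzer_inner_hasDerivAt (u : ℝ) :
    HasDerivAt (fun x : ℝ => 1 - Real.exp (-x)) (Real.exp (-u)) u := by
  have hneg : HasDerivAt (fun x : ℝ => -x) (-1) u := (hasDerivAt_id u).neg
  have hexp : HasDerivAt (fun x : ℝ => Real.exp (-x)) (Real.exp (-u) * -1) u :=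
    (Real.hasDerivAt_exp (-u)).comp u hneg
  simpa using hexp.const_sub 1

private lemma alzerH_hasDerivAt (m c : ℝ) {u : ℝ} (hu : 0 < u) :
    HasDerivAt (alzerH m c) (alzerH' m c u) u := by
  have hin := alzer_inner_hasDerivAt u
  have hlog2 : HasDerivAt (fun x : ℝ => Real.log (1 - Real.exp (-x)))
      ((1 - Real.exp (-u))⁻¹ * Real.exp (-u)) u :=
    by have := (Real.hasDerivAt_log (ne_of_gt (alzer_inner_pos hu))).comp u hin; exact this
  have h := (((Real.hasDerivAt_log (ne_of_gt hu)).sub hlog2).const_mul m).sub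
    ((hasDerivAt_id u).const_mul c)
  refine h.congr_deriv ?_
  unfold alzerH'
  ring

private lemma alzerH'_hasDerivAt (m c : ℝ) {u : ℝ} (hu : 0 < u) :
    HasDerivAt (alzerH' m c) (alzerH'' m u) u := by
  have hin := alzer_inner_hasDerivAt u
  have hexp : HasDerivAt (fun x : ℝ => Real.exp (-x)) (Real.exp (-u) * -1) u :=
    (Real.hasDerivAt_exp (-u)).comp u ((hasDerivAt_id u).neg)
  have hne : 1 - Real.exp (-u) ≠ 0 := ne_of_gt (alzer_inner_pos hu)
  have hdiv := hexp.div hin hne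
  have h := (((hasDerivAt_inv (ne_of_gt hu)).sub hdiv).const_mul m).sub_const c
  refine h.congr_deriv ?_
  unfold alzerH''
  field_simp
  ring

private lemma alzerH''_nonpos (m : ℝ) (hm : 0 ≤ m) {u : ℝ} (hu : 0 < u) :
    alzerH'' m u ≤ 0 := by
  have key : u ^ 2 * Real.exp (-u) ≤ (1 - Real.exp (-u)) ^ 2 := by
    have h := alzer_exp_aux hu
    have h2 : Real.exp (-(u / 2)) * Real.exp (-(u / 2)) = Real.exp (-u) := by
      rw [← Real.exp_add]; ring_nf
    nlinarith [Real.exp_pos (-(u / 2)), mul_pos hu (Real.exp_pos (-(u / 2)))]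
  have h3 : Real.exp (-u) / (1 - Real.exp (-u)) ^ 2 ≤ (u ^ 2)⁻¹ := by
    rw [div_le_iff₀ (pow_pos (alzer_inner_pos hu) 2), inv_mul_eq_div, le_div_iff₀ (by positivity)]
    linarith
  have := mul_nonneg hm (sub_nonneg.mpr h3)
  unfold alzerH''
  nlinarith [this]

private lemma alzerH_zero (m c : ℝ) : alzerH m c 0 = 0 := by
  simp [alzerH]

private lemma alzerH_continuousOn (m c : ℝ) : ContinuousOn (alzerH m c) (Ici 0) := by
  intro u hu
  rcases eq_or_lt_of_le (mem_Ici.mp hu) with h0 | hpos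
  · subst h0
    -- continuity at 0 within Ici 0
    have hslope : Tendsto (fun u : ℝ => (1 - Real.exp (-u)) / u) (𝓝[≠] 0) (𝓝 1) := by
      have hd : HasDerivAt (fun x : ℝ => 1 - Real.exp (-x)) 1 0 := by
        simpa using alzer_inner_hasDerivAt 0
      have h := hasDerivAt_iff_tendsto_slope.mp hd
      exact h.congr fun x => by rw [slope_def_field]; simp
    have h4 : Tendsto (fun u : ℝ => (1 - Real.exp (-u)) / u) (𝓝[>] 0) (𝓝 1) :=
      hslope.mono_left (nhdsWithin_mono 0 (fun x hx => hx.ne'))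
    have h5 : Tendsto (fun u : ℝ => Real.log ((1 - Real.exp (-u)) / u)) (𝓝[>] 0) (𝓝 0) := by
      have := (Real.continuousAt_log one_ne_zero).tendsto.comp h4
      rwa [Real.log_one] at this
    have h6 : ∀ u ∈ Ioi (0:ℝ),
        alzerH m c u = -(m * Real.log ((1 - Real.exp (-u)) / u)) - c * u := by
      intro u hu
      rw [Real.log_div (ne_of_gt (alzer_inner_pos hu)) hu.ne']
      unfold alzerH; ring
    have h7 : Tendsto (fun u : ℝ => -(m * Real.log ((1 - Real.exp (-u)) / u)) - c * u)
        (𝓝[>] 0) (𝓝 0) := by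
      have hlin : Tendsto (fun u : ℝ => c * u) (𝓝[>] (0:ℝ)) (𝓝 0) := by
        have hc : Continuous fun u : ℝ => c * u := continuous_const.mul continuous_id
        simpa using (hc.tendsto 0).mono_left nhdsWithin_le_nhds
      have := ((h5.const_mul m).neg).sub hlin
      simpa using this
    have h8 : Tendsto (alzerH m c) (𝓝[>] 0) (𝓝 0) :=
      h7.congr' (eventually_of_mem self_mem_nhdsWithin (fun u hu => (h6 u hu).symm))
    rw [ContinuousWithinAt, alzerH_zero, ← Set.Ioi_insert, nhdsWithin_insert]
    exact tendsto_sup.mpr ⟨by simpa [alzerH_zero] using tendsto_pure_nhds (alzerH m c) 0, h8⟩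
  · -- continuity at u > 0
    have c1 : ContinuousAt (fun x : ℝ => 1 - Real.exp (-x)) u :=
      (continuous_const.sub (Real.continuous_exp.comp continuous_neg)).continuousAt
    have c2 : ContinuousAt (fun x : ℝ => Real.log (1 - Real.exp (-x))) u :=
      (Real.continuousAt_log (ne_of_gt (alzer_inner_pos hpos))).tendsto.comp c1
    have c3 : ContinuousAt Real.log u := Real.continuousAt_log (ne_of_gt hpos)
    exact ((continuousAt_const.mul (c3.sub c2)).sub
      (continuousAt_const.mul continuousAt_id)).continuousWithinAt

private lemma alzerH_concave (m c : ℝ) (hm : 0 ≤ m) : ConcaveOn ℝ (Ici 0) (alzerH m c) := by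
  apply concaveOn_of_hasDerivWithinAt2_nonpos (f' := alzerH' m c) (f'' := alzerH'' m)
    (convex_Ici 0) (alzerH_continuousOn m c)
  · intro x hx
    rw [interior_Ici] at hx
    exact ((alzerH_hasDerivAt m c hx).hasDerivWithinAt)
  · intro x hx
    rw [interior_Ici] at hx
    exact ((alzerH'_hasDerivAt m c hx).hasDerivWithinAt)
  · intro x hx
    rw [interior_Ici] at hx
    exact alzerH''_nonpos m hm hx

private lemma alzerH_cross (m c : ℝ) (hm : 0 ≤ m) {w z : ℝ} (hw : 0 < w) (hwz : w ≤ z)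
    (hHw : alzerH m c w < 0) : alzerH m c z < 0 := by
  by_contra hcon
  push_neg at hcon
  have hz : 0 < z := lt_of_lt_of_le hw hwz
  have hb : 0 < w / z := div_pos hw hz
  have hb1 : w / z ≤ 1 := (div_le_one hz).mpr hwz
  have := (alzerH_concave m c hm).2 (self_mem_Ici (a := (0:ℝ)))
    (mem_Ici.mpr hz.le) (by linarith : (0:ℝ) ≤ 1 - w / z) hb.le (by ring)
  simp only [smul_eq_mul, mul_zero, alzerH_zero, zero_add] at this
  rw [div_mul_cancel₀ w hz.ne'] at this
  nlinarith [mul_nonneg hb.le hcon]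

private lemma alzer_sign (N : ℕ) (hN : 0 < N) {k : ℝ} (hk : 0 < k)
    (hkN : k ^ N * (N.factorial : ℝ) = 1) {y : ℝ} (hy : 0 < y) :
    (N : ℝ) * (k * Real.exp (-(k * y)) * (1 - Real.exp (-(k * y))) ^ (N - 1))
        ≤ y ^ (N - 1) * Real.exp (-y) / ((N - 1).factorial : ℝ)
      ↔ 0 ≤ alzerH ((N : ℝ) - 1) ((1 - k) / k) (k * y) := by
  have hky : 0 < k * y := mul_pos hk hy
  have hE : 0 < 1 - Real.exp (-(k * y)) := alzer_inner_pos hky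
  have hcast : ((N - 1 : ℕ) : ℝ) = (N : ℝ) - 1 := Nat.cast_pred hN
  have hfacpos : (0 : ℝ) < ((N - 1).factorial : ℝ) := by exact_mod_cast (N - 1).factorial_pos
  have hA : (0 : ℝ) < y ^ (N - 1) * Real.exp (-y) / ((N - 1).factorial : ℝ) := by positivity
  have hB : (0 : ℝ) < (N : ℝ) *
      (k * Real.exp (-(k * y)) * (1 - Real.exp (-(k * y))) ^ (N - 1)) := by
    have : (0:ℝ) < (N:ℝ) := by exact_mod_cast hN
    positivity
  have hfac : ((N - 1).factorial : ℝ) * (N : ℝ) * k ^ N = 1 := by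
    have h1 : ((N - 1).factorial : ℝ) * (N : ℝ) = (N.factorial : ℝ) := by
      rw [mul_comm]; exact_mod_cast Nat.mul_factorial_pred hN.ne'
    rw [h1, mul_comm, hkN]
  have hNpos : (0:ℝ) < (N:ℝ) := by exact_mod_cast hN
  have hlogs : Real.log ((N - 1).factorial : ℝ) + Real.log (N : ℝ)
      + (N : ℝ) * Real.log k = 0 := by
    have h1 : Real.log (((N - 1).factorial : ℝ) * (N : ℝ) * k ^ N) = 0 := by
      rw [hfac, Real.log_one]
    rw [Real.log_mul (by positivity) (by positivity),
      Real.log_mul hfacpos.ne' hNpos.ne', Real.log_pow] at h1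
    linarith
  have hlogA : Real.log (y ^ (N - 1) * Real.exp (-y) / ((N - 1).factorial : ℝ))
      = ((N - 1 : ℕ) : ℝ) * Real.log y + (-y) - Real.log ((N - 1).factorial : ℝ) := by
    rw [Real.log_div (by positivity) hfacpos.ne',
      Real.log_mul (by positivity) (Real.exp_pos _).ne', Real.log_pow, Real.log_exp]
  have hlogB : Real.log ((N : ℝ) *
        (k * Real.exp (-(k * y)) * (1 - Real.exp (-(k * y))) ^ (N - 1)))
      = Real.log (N : ℝ) + Real.log k + (-(k * y))
        + ((N - 1 : ℕ) : ℝ) * Real.log (1 - Real.exp (-(k * y))) := by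
    rw [Real.log_mul hNpos.ne' (by positivity), Real.log_mul (by positivity) (by positivity),
      Real.log_mul hk.ne' (Real.exp_pos _).ne', Real.log_pow, Real.log_exp]
    ring
  have hHval : alzerH ((N : ℝ) - 1) ((1 - k) / k) (k * y)
      = ((N : ℝ) - 1) * (Real.log k + Real.log y - Real.log (1 - Real.exp (-(k * y))))
        - (1 - k) * y := by
    unfold alzerH
    rw [Real.log_mul hk.ne' hy.ne']
    field_simp
  rw [← Real.log_le_log_iff hB hA, ← sub_nonneg, hlogA, hlogB, hHval, hcast]
  constructor <;> intro h <;> nlinarith [hlogs]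

/-- Alzer's inequality: for a positive integer `N`, the CDF of a gamma(N,1) random
variable, `γ(N, y)/Γ(N)` with `γ(N,y) = ∫_0^y t^{N-1} e^{-t} dt`, is bounded below by
`(1 - e^{-κ y})^N` for all `y ≥ 0`, where `κ = (N!)^{-1/N}`. -/
theorem lower_incomplete_gamma_cdf_ge (N : ℕ) (hN : 0 < N) (y : ℝ) (hy : 0 ≤ y) :
    (∫ t in Set.Ioc 0 y, t ^ ((N : ℝ) - 1) * Real.exp (-t)) / (N - 1).factorial
      ≥ (1 - Real.exp (-((N.factorial : ℝ) ^ (-(1 : ℝ) / N) * y))) ^ N := by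
  have hcast : ((N - 1 : ℕ) : ℝ) = (N : ℝ) - 1 := Nat.cast_pred hN
  have hNpos : (0:ℝ) < (N:ℝ) := by exact_mod_cast hN
  have hfacpos : (0 : ℝ) < (N.factorial : ℝ) := by exact_mod_cast N.factorial_pos
  have hfacpos' : (0 : ℝ) < ((N - 1).factorial : ℝ) := by exact_mod_cast (N - 1).factorial_pos
  set k : ℝ := (N.factorial : ℝ) ^ (-(1 : ℝ) / N) with hkdef
  have hk : 0 < k := Real.rpow_pos_of_pos hfacpos _
  have hkN : k ^ N * (N.factorial : ℝ) = 1 := by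
    rw [hkdef, ← Real.rpow_natCast ((N.factorial : ℝ) ^ (-(1 : ℝ) / N)) N,
      ← Real.rpow_mul hfacpos.le]
    have : -(1 : ℝ) / N * N = -1 := by field_simp
    rw [this, Real.rpow_neg_one, inv_mul_cancel₀ hfacpos.ne']
  have hm : (0:ℝ) ≤ (N : ℝ) - 1 := by simp [Nat.one_le_cast.mpr hN]
  -- the integrand and the two parts of f
  set g : ℝ → ℝ := fun t => t ^ (N - 1) * Real.exp (-t) with hgdef
  have hgcont : Continuous g := (continuous_pow _).mul (Real.continuous_exp.comp continuous_neg)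
  set F : ℝ → ℝ := fun x => (∫ t in (0:ℝ)..x, g t) / ((N - 1).factorial : ℝ) with hFdef
  set G : ℝ → ℝ := fun x => (1 - Real.exp (-(k * x))) ^ N with hGdef
  -- reduce the goal
  have hInt : (∫ t in Set.Ioc 0 y, t ^ ((N : ℝ) - 1) * Real.exp (-t)) = ∫ t in (0:ℝ)..y, g t := by
    rw [intervalIntegral.integral_of_le hy, hgdef]
    simp only [← hcast, Real.rpow_natCast]
  rw [ge_iff_le, hInt, ← sub_nonneg]
  show 0 ≤ F y - G y
  -- derivatives
  have hFder : ∀ x : ℝ, HasDerivAt F (g x / ((N - 1).factorial : ℝ)) x := fun x =>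
    ((hgcont.integral_hasStrictDerivAt 0 x).hasDerivAt).div_const _
  have hGder : ∀ x : ℝ, HasDerivAt G
      ((N : ℝ) * (k * Real.exp (-(k * x)) * (1 - Real.exp (-(k * x))) ^ (N - 1))) x := by
    intro x
    have h1 : HasDerivAt (fun x : ℝ => -(k * x)) (-k) x := by
      exact (((hasDerivAt_id x).const_mul k).neg).congr_deriv (by simp)
    have h2 : HasDerivAt (fun x : ℝ => Real.exp (-(k * x))) (Real.exp (-(k * x)) * -k) x :=
      (Real.hasDerivAt_exp _).comp x h1
    have h3 : HasDerivAt (fun x : ℝ => 1 - Real.exp (-(k * x))) (k * Real.exp (-(k * x))) x := by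
      have := h2.const_sub 1
      exact this.congr_deriv (by ring)
    have h4 := h3.pow N
    rw [hGdef]
    exact h4.congr_deriv (by ring)
  have hfder : ∀ x : ℝ, HasDerivAt (fun z => F z - G z)
      (g x / ((N - 1).factorial : ℝ)
        - (N : ℝ) * (k * Real.exp (-(k * x)) * (1 - Real.exp (-(k * x))) ^ (N - 1))) x :=
    fun x => (hFder x).sub (hGder x)
  -- trivial case y = 0
  rcases eq_or_lt_of_le hy with rfl | hy0
  · simp [hFdef, hGdef, intervalIntegral.integral_same, zero_pow hN.ne']
  -- value at 0
  have hf0 : F 0 - G 0 = 0 := by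
    simp [hFdef, hGdef, intervalIntegral.integral_same, zero_pow hN.ne']
  by_cases hcase : ∀ x ∈ Set.Ioc (0:ℝ) y, 0 ≤ alzerH ((N:ℝ) - 1) ((1 - k) / k) (k * x)
  · -- f is monotone on [0, y]
    have hmono : MonotoneOn (fun z => F z - G z) (Set.Icc 0 y) := by
      apply monotoneOn_of_hasDerivWithinAt_nonneg (convex_Icc 0 y)
        (fun x _ => (hfder x).continuousAt.continuousWithinAt)
        (fun x _ => (hfder x).hasDerivWithinAt)
      intro x hx
      rw [interior_Icc] at hx
      have hsign := (alzer_sign N hN hk hkN hx.1).mpr (hcase x ⟨hx.1, hx.2.le⟩)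
      linarith
    have h5 : F 0 - G 0 ≤ F y - G y :=
      hmono (Set.left_mem_Icc.mpr hy) (Set.right_mem_Icc.mpr hy) hy
    linarith [hf0]
  · push_neg at hcase
    obtain ⟨w, hw, hHw⟩ := hcase
    -- f is antitone on [y, ∞)
    have hanti : AntitoneOn (fun z => F z - G z) (Set.Ici y) := by
      apply antitoneOn_of_hasDerivWithinAt_nonpos (convex_Ici y)
        (fun x _ => (hfder x).continuousAt.continuousWithinAt)
        (fun x _ => (hfder x).hasDerivWithinAt)
      intro x hx
      rw [interior_Ici] at hx
      have hxpos : 0 < x := lt_of_le_of_lt hy hx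
      have hcross : alzerH ((N:ℝ) - 1) ((1 - k) / k) (k * x) < 0 :=
        alzerH_cross ((N:ℝ) - 1) ((1 - k) / k) hm (mul_pos hk hw.1)
          (mul_le_mul_of_nonneg_left (le_trans hw.2 hx.le) hk.le) hHw
      have hsign := (alzer_sign N hN hk hkN hxpos).not.mpr (not_le.mpr hcross)
      push_neg at hsign
      linarith
    -- f tends to 0 at infinity
    have hI : IntegrableOn g (Set.Ioi (0:ℝ)) := by
      apply (Real.GammaIntegral_convergent hNpos).congr_fun _ measurableSet_Ioi
      intro x _
      rw [hgdef]
      simp only [← hcast, Real.rpow_natCast]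
      ring
    have hval : (∫ x in Set.Ioi (0:ℝ), g x) = ((N - 1).factorial : ℝ) := by
      have h1 := Real.Gamma_eq_integral hNpos
      have h2 : Real.Gamma (N : ℝ) = ((N - 1).factorial : ℝ) := by
        have h3 := Real.Gamma_nat_eq_factorial (N - 1)
        have h4 : ((N - 1 : ℕ) : ℝ) + 1 = (N : ℝ) := by rw [hcast]; ring
        rwa [h4] at h3
      rw [h2] at h1
      rw [h1]
      apply setIntegral_congr_fun measurableSet_Ioi
      intro x _
      rw [hgdef]
      simp only [← hcast, Real.rpow_natCast]
      ring
    have hFtop : Tendsto F atTop (𝓝 1) := by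
      have h1 := intervalIntegral_tendsto_integral_Ioi 0 hI tendsto_id
      rw [hval] at h1
      have h2 := h1.div_const ((N - 1).factorial : ℝ)
      rwa [div_self hfacpos'.ne'] at h2
    have hGtop : Tendsto G atTop (𝓝 1) := by
      have hexp : Tendsto (fun x : ℝ => Real.exp (-(k * x))) atTop (𝓝 0) := by
        apply Real.tendsto_exp_atBot.comp
        have h1 : Tendsto (fun x : ℝ => k * x) atTop atTop :=
          Tendsto.const_mul_atTop hk tendsto_id
        exact tendsto_neg_atBot_iff.mpr h1
      have hc : Continuous fun t : ℝ => (1 - t) ^ N := (continuous_const.sub continuous_id).pow N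
      have := (hc.tendsto 0).comp hexp
      simpa [hGdef, Function.comp_def] using this
    have hftop : Tendsto (fun z => F z - G z) atTop (𝓝 0) := by
      simpa using hFtop.sub hGtop
    exact le_of_tendsto hftop (Filter.eventually_atTop.mpr
      ⟨y, fun z hz => hanti Set.self_mem_Ici (Set.mem_Ici.mpr hz) hz⟩)
end

section
/- Let X be a gamma(N,1) random variable with N a positive integer and I ≥ 0 an independent random variable. Then Pr(X ≥ c·I) ≤ Σ_{n=1}^{N} C(N,n) (-1)^{n+1} E[exp(-a·n·c·I)] for any c > 0, where a = (N!)^{-1/N}. -/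
open MeasureTheory ProbabilityTheory Real

open Set Filter

noncomputable def aa (N : ℕ) : ℝ := (N.factorial : ℝ) ^ (-(1:ℝ)/N)

noncomputable def EE (N : ℕ) (y : ℝ) : ℝ :=
  1 - Real.exp (-y) * ∑ k ∈ Finset.range N, y^k / k.factorial

noncomputable def GG (N : ℕ) (y : ℝ) : ℝ := (1 - Real.exp (-(aa N * y)))^N

lemma aa_pos (N : ℕ) : 0 < aa N := by
  apply Real.rpow_pos_of_pos
  exact_mod_cast N.factorial_pos

lemma aa_le_one (N : ℕ) : aa N ≤ 1 := by
  apply Real.rpow_le_one_of_one_le_of_nonpos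
  · exact_mod_cast N.factorial_pos
  · rw [neg_div]
    exact neg_nonpos.mpr (by positivity)

lemma log_aa (N : ℕ) (hN : 0 < N) : (N : ℝ) * Real.log (aa N) = -Real.log N.factorial := by
  rw [aa, Real.log_rpow (by exact_mod_cast N.factorial_pos)]
  have : (N : ℝ) ≠ 0 := by positivity
  field_simp

lemma hasDerivAt_EE (M : ℕ) (y : ℝ) :
    HasDerivAt (EE (M+1)) (y^M * Real.exp (-y) / M.factorial) y := by
  have hS : HasDerivAt (fun y : ℝ => ∑ k ∈ Finset.range (M+1), y^k / k.factorial)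
      (∑ k ∈ Finset.range M, y^k / k.factorial) y := by
    have h : HasDerivAt (fun y : ℝ => ∑ k ∈ Finset.range (M+1), y^k / k.factorial)
        (∑ k ∈ Finset.range (M+1), (k * y^(k-1) / k.factorial)) y := by
      apply HasDerivAt.fun_sum
      intro k _
      exact (hasDerivAt_pow k y).div_const _
    convert h using 1
    rw [Finset.sum_range_succ']
    simp only [Nat.cast_zero, zero_mul, zero_div, add_zero]
    apply Finset.sum_congr rfl
    intro i _
    rw [Nat.factorial_succ]
    push_cast
    have : (i.factorial : ℝ) ≠ 0 := by exact_mod_cast i.factorial_pos.ne'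
    field_simp
  have hexp : HasDerivAt (fun y : ℝ => Real.exp (-y)) (-Real.exp (-y)) y := by
    simpa using ((hasDerivAt_id y).neg).exp
  have := ((hexp.mul hS).const_sub 1)
  refine this.congr_deriv ?_
  rw [Finset.sum_range_succ]
  have : (M.factorial : ℝ) ≠ 0 := by exact_mod_cast M.factorial_pos.ne'
  field_simp
  ring

lemma hasDerivAt_GG (N : ℕ) (y : ℝ) :
    HasDerivAt (GG N)
      ((N : ℝ) * (1 - Real.exp (-(aa N * y)))^(N-1) * (aa N * Real.exp (-(aa N * y)))) y := by
  have hu : HasDerivAt (fun y : ℝ => 1 - Real.exp (-(aa N * y)))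
      (aa N * Real.exp (-(aa N * y))) y := by
    have h1 : HasDerivAt (fun y : ℝ => -(aa N * y)) (-aa N) y := by
      simpa using ((hasDerivAt_id y).const_mul (aa N)).fun_neg
    have := (h1.exp).const_sub 1
    refine this.congr_deriv ?_
    ring
  exact (hu.fun_pow N).congr_deriv (by ring)

-- key inequality : u * exp(u/2) ≤ exp u - 1 for u ≥ 0
lemma key_exp (u : ℝ) (hu : 0 ≤ u) : u * Real.exp (u/2) ≤ Real.exp u - 1 := by
  have ht : (0:ℝ) ≤ u/2 := by linarith
  have hs : u/2 ≤ Real.sinh (u/2) := Real.self_le_sinh_iff.mpr ht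
  rw [Real.sinh_eq, Real.exp_neg] at hs
  have hp : 0 < Real.exp (u/2) := Real.exp_pos _
  have hinv : Real.exp (u/2) * (Real.exp (u/2))⁻¹ = 1 := mul_inv_cancel₀ hp.ne'
  have hexp : Real.exp u = Real.exp (u/2) * Real.exp (u/2) := by
    rw [← Real.exp_add]; ring_nf
  nlinarith [hp]

lemma key_exp_sq (u : ℝ) (hu : 0 ≤ u) : u^2 * Real.exp u ≤ (Real.exp u - 1)^2 := by
  have h := key_exp u hu
  have h1 : 0 ≤ u * Real.exp (u/2) := by positivity
  have hexp : Real.exp u = Real.exp (u/2) * Real.exp (u/2) := by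
    rw [← Real.exp_add]; ring_nf
  nlinarith [h, h1]
noncomputable def pp (M : ℕ) (y : ℝ) : ℝ := y^M * Real.exp (-y) / M.factorial

noncomputable def qq (M : ℕ) (y : ℝ) : ℝ :=
  ((M+1 : ℕ) : ℝ) * (1 - Real.exp (-(aa (M+1) * y)))^M * (aa (M+1) * Real.exp (-(aa (M+1) * y)))

noncomputable def psi (M : ℕ) (y : ℝ) : ℝ :=
  -(1 - aa (M+1))*y
    + M*(Real.log (aa (M+1)) + Real.log y - Real.log (1 - Real.exp (-(aa (M+1) * y))))

noncomputable def psi' (M : ℕ) (y : ℝ) : ℝ :=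
  -(1 - aa (M+1)) + M*(1/y - aa (M+1)/(Real.exp (aa (M+1) * y) - 1))

lemma one_sub_exp_pos {a y : ℝ} (ha : 0 < a) (hy : 0 < y) : 0 < 1 - Real.exp (-(a*y)) := by
  have : Real.exp (-(a*y)) < 1 := Real.exp_lt_one_iff.mpr (by nlinarith)
  linarith

lemma pp_pos (M : ℕ) {y : ℝ} (hy : 0 < y) : 0 < pp M y := by
  unfold pp
  have := M.factorial_pos
  positivity

lemma qq_pos (M : ℕ) {y : ℝ} (hy : 0 < y) : 0 < qq M y := by
  unfold qq
  have h1 := one_sub_exp_pos (aa_pos (M+1)) hy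
  have h2 := aa_pos (M+1)
  positivity

-- psi = log pp - log qq
lemma psi_eq (M : ℕ) {y : ℝ} (hy : 0 < y) :
    psi M y = Real.log (pp M y) - Real.log (qq M y) := by
  have ha := aa_pos (M+1)
  have hv := one_sub_exp_pos ha hy
  have hMf : (0:ℝ) < M.factorial := by exact_mod_cast M.factorial_pos
  have hNf : (0:ℝ) < (M+1).factorial := by exact_mod_cast (M+1).factorial_pos
  have hlogp : Real.log (pp M y)
      = M * Real.log y + (-y) - Real.log (M.factorial : ℝ) := by
    unfold pp
    rw [Real.log_div (by positivity) (by positivity), Real.log_mul (by positivity)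
      (Real.exp_ne_zero _), Real.log_pow, Real.log_exp]
  have hlogq : Real.log (qq M y)
      = Real.log ((M+1 : ℕ) : ℝ) + M * Real.log (1 - Real.exp (-(aa (M+1) * y)))
        + (Real.log (aa (M+1)) + (-(aa (M+1) * y))) := by
    unfold qq
    rw [Real.log_mul (by positivity) (by positivity), Real.log_mul (by positivity)
      (by positivity), Real.log_mul (by positivity) (Real.exp_ne_zero _), Real.log_pow,
      Real.log_exp]
  have hNa : ((M+1 : ℕ) : ℝ) * Real.log (aa (M+1)) = -Real.log ((M+1).factorial : ℝ) := by
    rw [aa, Real.log_rpow hNf]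
    have : ((M+1 : ℕ) : ℝ) ≠ 0 := by positivity
    field_simp
  have hfact : Real.log (((M+1).factorial : ℝ))
      = Real.log ((M+1 : ℕ) : ℝ) + Real.log ((M.factorial : ℝ)) := by
    rw [Nat.factorial_succ]
    push_cast
    rw [Real.log_mul (by positivity) (by positivity)]
  rw [hlogp, hlogq, psi]
  push_cast at hNa hfact ⊢
  linarith [hNa, hfact]

lemma psi_nonneg_iff (M : ℕ) {y : ℝ} (hy : 0 < y) : 0 ≤ psi M y ↔ qq M y ≤ pp M y := by
  rw [psi_eq M hy, sub_nonneg, Real.log_le_log_iff (qq_pos M hy) (pp_pos M hy)]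

lemma psi_nonpos_iff (M : ℕ) {y : ℝ} (hy : 0 < y) : psi M y ≤ 0 ↔ pp M y ≤ qq M y := by
  rw [psi_eq M hy, sub_nonpos, Real.log_le_log_iff (pp_pos M hy) (qq_pos M hy)]

-- lower bound for psi
lemma psi_lower (M : ℕ) {y : ℝ} (hy : 0 < y) : -(1 - aa (M+1)) * y ≤ psi M y := by
  have ha := aa_pos (M+1)
  have hv := one_sub_exp_pos ha hy
  have hle : 1 - Real.exp (-(aa (M+1) * y)) ≤ aa (M+1) * y := by
    have := Real.add_one_le_exp (-(aa (M+1) * y))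
    linarith
  have hlog : Real.log (1 - Real.exp (-(aa (M+1) * y))) ≤ Real.log (aa (M+1) * y) :=
    Real.log_le_log hv hle
  rw [Real.log_mul ha.ne' hy.ne'] at hlog
  have : (0:ℝ) ≤ M := Nat.cast_nonneg M
  unfold psi
  nlinarith [hlog]
lemma hasDerivAt_one_sub_exp (a y : ℝ) :
    HasDerivAt (fun y : ℝ => 1 - Real.exp (-(a * y))) (a * Real.exp (-(a * y))) y := by
  have h1 : HasDerivAt (fun y : ℝ => -(a * y)) (-a) y := by
    simpa using ((hasDerivAt_id y).const_mul a).fun_neg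
  have := (h1.exp).const_sub 1
  refine this.congr_deriv ?_
  ring

lemma exp_gt_one {a y : ℝ} (ha : 0 < a) (hy : 0 < y) : 1 < Real.exp (a * y) := by
  rw [show (1:ℝ) = Real.exp 0 from (Real.exp_zero).symm]
  exact Real.exp_lt_exp.mpr (by positivity)

lemma hasDerivAt_psi (M : ℕ) {y : ℝ} (hy : 0 < y) :
    HasDerivAt (psi M) (psi' M y) y := by
  set a := aa (M+1) with ha_def
  have ha := aa_pos (M+1)
  have hv := one_sub_exp_pos ha hy
  have hlog1 : HasDerivAt Real.log (1/y) y := by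
    simpa [one_div] using Real.hasDerivAt_log hy.ne'
  have hlogv : HasDerivAt (fun y : ℝ => Real.log (1 - Real.exp (-(a * y))))
      ((a * Real.exp (-(a * y))) / (1 - Real.exp (-(a * y)))) y :=
    (hasDerivAt_one_sub_exp a y).log hv.ne'
  have h0 : HasDerivAt (fun y : ℝ => -(1 - a)*y) (-(1 - a)) y := by
    simpa using (hasDerivAt_id y).const_mul (-(1-a))
  have h1 : HasDerivAt
      (fun y : ℝ => (M:ℝ)*(Real.log a + Real.log y - Real.log (1 - Real.exp (-(a * y)))))
      ((M:ℝ)*((0 + 1/y) - (a * Real.exp (-(a * y))) / (1 - Real.exp (-(a * y))))) y :=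
    (((hasDerivAt_const y (Real.log a)).add hlog1).sub hlogv).const_mul (M:ℝ)
  have hmain := h0.add h1
  have hE : (0:ℝ) < Real.exp (a*y) := Real.exp_pos _
  have hne : Real.exp (a*y) - 1 ≠ 0 := by
    have := exp_gt_one ha hy; linarith
  have heq : psi' M y
      = -(1 - a) + (M:ℝ)*((0 + 1/y) - (a * Real.exp (-(a * y))) / (1 - Real.exp (-(a * y)))) := by
    unfold psi'
    rw [Real.exp_neg]
    rw [← ha_def]
    field_simp
    ring
  rw [heq]
  exact hmain

noncomputable def psi'' (M : ℕ) (y : ℝ) : ℝ :=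
  (M:ℝ) * (-(1/y^2) + (aa (M+1))^2 * Real.exp (aa (M+1) * y) / (Real.exp (aa (M+1) * y) - 1)^2)

lemma hasDerivAt_psi' (M : ℕ) {y : ℝ} (hy : 0 < y) :
    HasDerivAt (psi' M) (psi'' M y) y := by
  set a := aa (M+1) with ha_def
  have ha := aa_pos (M+1)
  have hE : (0:ℝ) < Real.exp (a*y) := Real.exp_pos _
  have hne : Real.exp (a*y) - 1 ≠ 0 := by
    have := exp_gt_one ha hy; linarith
  have hinv : HasDerivAt (fun y : ℝ => 1/y) (-(1/y^2)) y := by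
    simpa [one_div] using hasDerivAt_inv hy.ne'
  have hw : HasDerivAt (fun y : ℝ => Real.exp (a * y) - 1) (Real.exp (a * y) * a) y := by
    simpa using (((hasDerivAt_id y).const_mul a).exp).sub_const 1
  have hq : HasDerivAt (fun y : ℝ => a / (Real.exp (a * y) - 1))
      (-(a * (Real.exp (a * y) * a)) / (Real.exp (a * y) - 1)^2) y := by
    have := (hw.fun_inv hne).const_mul a
    refine this.congr_deriv ?_
    field_simp
  have hmain := ((hinv.sub hq).const_mul (M:ℝ)).const_add (-(1 - a))
  have heq : psi'' M y
      = (M:ℝ) * (-(1/y^2) - (-(a * (Real.exp (a * y) * a)) / (Real.exp (a * y) - 1)^2)) := by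
    unfold psi''
    rw [← ha_def]
    field_simp
    try ring
    try simp
  rw [heq]
  exact hmain

lemma psi''_nonpos (M : ℕ) {y : ℝ} (hy : 0 < y) : psi'' M y ≤ 0 := by
  set a := aa (M+1) with ha_def
  have ha := aa_pos (M+1)
  have hE1 := exp_gt_one ha hy
  have hkey := key_exp_sq (a*y) (by positivity)
  have hMn : (0:ℝ) ≤ (M:ℝ) := Nat.cast_nonneg M
  unfold psi''
  rw [← ha_def]
  have h1 : a^2 * Real.exp (a * y) / (Real.exp (a * y) - 1)^2 ≤ 1/y^2 := by
    rw [div_le_div_iff₀ (by nlinarith) (by positivity)]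
    nlinarith [hkey]
  nlinarith [h1]

lemma psi'_antitoneOn (M : ℕ) : AntitoneOn (psi' M) (Set.Ioi 0) := by
  apply antitoneOn_of_deriv_nonpos (convex_Ioi 0)
  · intro x hx
    exact (hasDerivAt_psi' M hx).differentiableAt.continuousAt.continuousWithinAt
  · rw [interior_Ioi]
    intro x hx
    exact (hasDerivAt_psi' M hx).differentiableAt.differentiableWithinAt
  · rw [interior_Ioi]
    intro x hx
    rw [(hasDerivAt_psi' M hx).deriv]
    exact psi''_nonpos M hx

lemma tendsto_EE (N : ℕ) : Filter.Tendsto (EE N) atTop (nhds 1) := by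
  have h : Filter.Tendsto (fun y => Real.exp (-y) * ∑ k ∈ Finset.range N, y^k / k.factorial)
      atTop (nhds 0) := by
    have h2 : ∀ y : ℝ, Real.exp (-y) * ∑ k ∈ Finset.range N, y^k / k.factorial
        = ∑ k ∈ Finset.range N, (y^k * Real.exp (-y)) / k.factorial := by
      intro y
      rw [Finset.mul_sum]
      exact Finset.sum_congr rfl (fun k _ => by ring)
    simp only [h2]
    have := tendsto_finset_sum (Finset.range N)
      (fun k (_ : k ∈ Finset.range N) =>
        (tendsto_pow_mul_exp_neg_atTop_nhds_zero k).div_const (k.factorial : ℝ))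
    simpa using this
  have := h.const_sub 1
  exact (by simpa using this : Filter.Tendsto (fun y : ℝ => 1 - Real.exp (-y) * ∑ k ∈ Finset.range N, y^k / k.factorial) atTop (nhds 1))

lemma tendsto_GG (N : ℕ) : Filter.Tendsto (GG N) atTop (nhds 1) := by
  have he : Filter.Tendsto (fun y : ℝ => Real.exp (-(aa N * y))) atTop (nhds 0) := by
    have h1 : Filter.Tendsto (fun y : ℝ => aa N * y) atTop atTop :=
      Filter.Tendsto.const_mul_atTop (aa_pos N) tendsto_id
    have h2 : Filter.Tendsto (fun y : ℝ => -(aa N * y)) atTop atBot :=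
      Filter.tendsto_neg_atTop_atBot.comp h1
    exact Real.tendsto_exp_atBot.comp h2
  have h3 : Filter.Tendsto (fun y : ℝ => (1 - Real.exp (-(aa N * y)))^N) atTop
      (nhds ((1 - (0:ℝ))^N)) := (((tendsto_const_nhds : Filter.Tendsto _ atTop (nhds (1:ℝ))).sub
        he).pow N)
  exact (by simpa using h3 : Filter.Tendsto (fun y : ℝ => (1 - Real.exp (-(aa N * y)))^N) atTop (nhds 1))

lemma EE_zero (M : ℕ) : EE (M+1) 0 = 0 := by
  unfold EE
  rw [Finset.sum_range_succ']
  norm_num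

lemma GG_zero (M : ℕ) : GG (M+1) 0 = 0 := by
  simp [GG, Real.exp_zero]

lemma alzer (M : ℕ) : ∀ y : ℝ, 0 ≤ y → GG (M+1) y ≤ EE (M+1) y := by
  intro y0 hy0
  have hD : ∀ y : ℝ, HasDerivAt (fun y => EE (M+1) y - GG (M+1) y) (pp M y - qq M y) y := by
    intro y
    have h1 := hasDerivAt_EE M y
    have h2 := hasDerivAt_GG (M+1) y
    simp only [Nat.add_sub_cancel] at h2
    exact h1.sub h2
  have hD0 : EE (M+1) 0 - GG (M+1) 0 = 0 := by rw [EE_zero, GG_zero]; ring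
  have htend : Filter.Tendsto (fun y => EE (M+1) y - GG (M+1) y) atTop (nhds 0) := by
    have := (tendsto_EE (M+1)).sub (tendsto_GG (M+1))
    simpa using this
  rcases eq_or_lt_of_le hy0 with h0|hy0pos
  · rw [← h0]
    linarith [EE_zero M, GG_zero M]
  suffices h : 0 ≤ EE (M+1) y0 - GG (M+1) y0 by linarith
  by_cases hcase : ∀ z, y0 ≤ z → pp M z - qq M z ≤ 0
  · have hanti : AntitoneOn (fun y => EE (M+1) y - GG (M+1) y) (Ici y0) := by
      apply antitoneOn_of_deriv_nonpos (convex_Ici y0)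
      · exact fun x _ => (hD x).differentiableAt.continuousAt.continuousWithinAt
      · rw [interior_Ici]
        exact fun x _ => (hD x).differentiableAt.differentiableWithinAt
      · rw [interior_Ici]
        intro x hx
        rw [(hD x).deriv]
        exact hcase x (le_of_lt hx)
    have hev : ∀ᶠ z in atTop, EE (M+1) z - GG (M+1) z ≤ EE (M+1) y0 - GG (M+1) y0 :=
      (Filter.eventually_ge_atTop y0).mono (fun z hz => hanti self_mem_Ici hz hz)
    exact le_of_tendsto htend hev
  · push_neg at hcase
    obtain ⟨z, hz1, hz2⟩ := hcase
    have hz0 : 0 < z := lt_of_lt_of_le hy0pos hz1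
    have hψz : 0 < psi M z := by
      by_contra h
      push_neg at h
      have := (psi_nonpos_iff M hz0).mp h
      linarith
    have hclaim : ∀ u, 0 < u → u ≤ z → 0 ≤ psi M u := by
      intro u hu huz
      rcases eq_or_lt_of_le huz with rfl|hlt
      · exact hψz.le
      by_contra hneg
      push_neg at hneg
      have hcont1 : ContinuousOn (psi M) (Icc u z) := fun x hx =>
        (hasDerivAt_psi M (lt_of_lt_of_le hu hx.1)).differentiableAt.continuousAt.continuousWithinAt
      obtain ⟨c, hc, hceq⟩ := exists_hasDerivAt_eq_slope (psi M) (psi' M) hlt hcont1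
        (fun x hx => hasDerivAt_psi M (hu.trans hx.1))
      have hcpos : 0 < psi' M c := by
        rw [hceq]
        apply div_pos <;> linarith
      set y1 := min (u/2) (-(psi M u)/2) with hy1_def
      have hy1pos : 0 < y1 := lt_min (by linarith) (by linarith)
      have hy1u : y1 < u := lt_of_le_of_lt (min_le_left _ _) (by linarith)
      have hψy1 : psi M u < psi M y1 := by
        have hlb := psi_lower M hy1pos
        have h1a : 0 ≤ 1 - aa (M+1) := by linarith [aa_le_one (M+1)]
        have h2 : -(1 - aa (M+1)) * y1 ≥ -y1 := by nlinarith [mul_pos (aa_pos (M+1)) hy1pos]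
        have h3 : y1 ≤ -(psi M u)/2 := min_le_right _ _
        linarith
      have hcont2 : ContinuousOn (psi M) (Icc y1 u) := fun x hx =>
        (hasDerivAt_psi M (lt_of_lt_of_le hy1pos hx.1)).differentiableAt.continuousAt.continuousWithinAt
      obtain ⟨c', hc'mem, hc'eq⟩ := exists_hasDerivAt_eq_slope (psi M) (psi' M) hy1u hcont2
        (fun x hx => hasDerivAt_psi M (hy1pos.trans hx.1))
      have hc'neg : psi' M c' < 0 := by
        rw [hc'eq]
        apply div_neg_of_neg_of_pos
        · linarith
        · linarith [hc'mem.1, hc'mem.2]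
      have hlt2 : c' < c := by
        have := hc'mem.2
        have := hc.1
        linarith
      have hanti := psi'_antitoneOn M (mem_Ioi.mpr (hy1pos.trans hc'mem.1))
        (mem_Ioi.mpr ((hy1pos.trans hc'mem.1).trans hlt2)) hlt2.le
      linarith
    have hmono : MonotoneOn (fun y => EE (M+1) y - GG (M+1) y) (Icc 0 z) := by
      apply monotoneOn_of_deriv_nonneg (convex_Icc 0 z)
      · exact fun x _ => (hD x).differentiableAt.continuousAt.continuousWithinAt
      · rw [interior_Icc]
        exact fun x _ => (hD x).differentiableAt.differentiableWithinAt
      · rw [interior_Icc]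
        intro x hx
        rw [(hD x).deriv]
        have := (psi_nonneg_iff M hx.1).mp (hclaim x hx.1 hx.2.le)
        linarith
    have := hmono (mem_Icc.mpr ⟨le_refl 0, hz0.le⟩) (mem_Icc.mpr ⟨hy0, hz1⟩) hy0
    simpa [hD0] using this

lemma continuous_pp (M : ℕ) : Continuous (pp M) := by
  unfold pp
  fun_prop

lemma pdf_eq (M : ℕ) {x : ℝ} (hx : 0 ≤ x) : gammaPDFReal ((M+1:ℕ):ℝ) 1 x = pp M x := by
  unfold gammaPDFReal pp
  rw [if_pos hx]
  rw [show ((M+1 : ℕ):ℝ) = (M:ℝ) + 1 by push_cast; ring]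
  rw [Real.Gamma_nat_eq_factorial]
  rw [show (M:ℝ) + 1 - 1 = ((M:ℕ):ℝ) by ring]
  rw [Real.rpow_natCast, Real.one_rpow, one_mul]
  ring

lemma pdf_neg (M : ℕ) {x : ℝ} (hx : x < 0) : gammaPDFReal ((M+1:ℕ):ℝ) 1 x = 0 := by
  unfold gammaPDFReal
  rw [if_neg (not_le.mpr hx)]

lemma gamma_Iic (M : ℕ) {y : ℝ} (hy : 0 ≤ y) :
    ((gammaMeasure ((M+1:ℕ):ℝ) 1) (Iic y)).toReal = EE (M+1) y := by
  have hN : (0:ℝ) < ((M+1:ℕ):ℝ) := by positivity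
  have hprob : IsProbabilityMeasure (gammaMeasure ((M+1:ℕ):ℝ) 1) :=
    isProbabilityMeasure_gammaMeasure hN one_pos
  have h1 : ((gammaMeasure ((M+1:ℕ):ℝ) 1) (Iic y)).toReal
      = ∫ x in Iic y, gammaPDFReal ((M+1:ℕ):ℝ) 1 x := by
    rw [← measureReal_def, ← cdf_eq_real]
    exact cdf_gammaMeasure_eq_integral hN one_pos y
  rw [h1]
  have hsetEq : Iio (0:ℝ) ∪ Icc 0 y = Iic y := Iio_union_Icc_eq_Iic hy
  have hfi1 : IntegrableOn (gammaPDFReal ((M+1:ℕ):ℝ) 1) (Iio 0) := by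
    apply (integrableOn_congr_fun (g := fun _ => (0:ℝ)) ?_ measurableSet_Iio).mpr
    · exact integrableOn_zero
    · intro x hx
      exact pdf_neg M hx
  have hfi2 : IntegrableOn (gammaPDFReal ((M+1:ℕ):ℝ) 1) (Icc 0 y) := by
    apply IntegrableOn.congr_fun ((continuous_pp M).integrableOn_Icc) ?_ measurableSet_Icc
    intro x hx
    exact (pdf_eq M hx.1).symm
  rw [← hsetEq, setIntegral_union (by
    rw [Set.disjoint_left]
    rintro x hx ⟨h0, _⟩
    exact absurd h0 (not_le.mpr hx)) measurableSet_Icc hfi1 hfi2]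
  have hz : ∫ x in Iio (0:ℝ), gammaPDFReal ((M+1:ℕ):ℝ) 1 x = 0 := by
    rw [setIntegral_congr_fun measurableSet_Iio (fun x hx => pdf_neg M hx)]
    simp
  have hIcc : ∫ x in Icc (0:ℝ) y, gammaPDFReal ((M+1:ℕ):ℝ) 1 x = EE (M+1) y := by
    rw [setIntegral_congr_fun measurableSet_Icc (fun x hx => pdf_eq M hx.1),
      MeasureTheory.integral_Icc_eq_integral_Ioc,
      ← intervalIntegral.integral_of_le hy]
    have := intervalIntegral.integral_eq_sub_of_hasDerivAt
      (f := EE (M+1)) (f' := pp M)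
      (fun x _ => hasDerivAt_EE M x)
      ((continuous_pp M).intervalIntegrable 0 y)
    rw [this, EE_zero, sub_zero]
  rw [hz, hIcc, zero_add]

lemma gamma_singleton (M : ℕ) (y : ℝ) : (gammaMeasure ((M+1:ℕ):ℝ) 1) {y} = 0 := by
  unfold gammaMeasure
  exact withDensity_absolutelyContinuous volume _ Real.volume_singleton

lemma gamma_Ici (M : ℕ) {y : ℝ} (hy : 0 ≤ y) :
    ((gammaMeasure ((M+1:ℕ):ℝ) 1) (Ici y)).toReal = 1 - EE (M+1) y := by
  have hN : (0:ℝ) < ((M+1:ℕ):ℝ) := by positivity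
  have hprob : IsProbabilityMeasure (gammaMeasure ((M+1:ℕ):ℝ) 1) :=
    isProbabilityMeasure_gammaMeasure hN one_pos
  set μ := gammaMeasure ((M+1:ℕ):ℝ) 1 with hμ
  have hIicIio : μ (Iic y) = μ (Iio y) := by
    have hset : Iic y = Iio y ∪ {y} := by
      rw [Set.union_comm, ← Set.Iio_insert]
      simp
    rw [hset, measure_union (by simp) (measurableSet_singleton y), gamma_singleton, add_zero]
  have hcompl : μ (Ici y) = 1 - μ (Iio y) := by
    rw [← Set.compl_Iio, measure_compl measurableSet_Iio (measure_ne_top μ _), measure_univ]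
  have hle : μ (Iio y) ≤ 1 := by
    rw [← measure_univ (μ := μ)]
    exact measure_mono (Set.subset_univ _)
  rw [hcompl, ENNReal.toReal_sub_of_le hle ENNReal.one_ne_top, ENNReal.toReal_one,
    ← hIicIio]
  have := gamma_Iic M hy
  rw [← hμ] at this
  rw [this]

noncomputable def BB (N : ℕ) (y : ℝ) : ℝ :=
  ∑ n ∈ Finset.Icc 1 N, (N.choose n : ℝ) * (-1:ℝ)^(n+1) * Real.exp (-(aa N * n * y))

lemma BB_eq (N : ℕ) (y : ℝ) : BB N y = 1 - GG N y := by
  unfold BB GG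
  set t := Real.exp (-(aa N * y)) with ht_def
  have hterm : ∀ n : ℕ, Real.exp (-(aa N * n * y)) = t^n := by
    intro n
    rw [ht_def, ← Real.exp_nat_mul]
    congr 1
    ring
  have hb : (1 - t)^N = ∑ k ∈ Finset.range (N+1), (-t)^k * 1^(N-k) * (N.choose k : ℝ) := by
    rw [← add_pow]
    ring_nf
  have hIccIoc : Finset.Icc 1 N = Finset.Ioc 0 N := (Finset.Icc_add_one_left_eq_Ioc 0 N)
  have hrange : Finset.range (N+1) = insert 0 (Finset.Ioc 0 N) := by
    rw [Finset.range_eq_Ico, Finset.Ico_add_one_right_eq_Icc, ← Finset.Ioc_insert_left (Nat.zero_le N)]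
  rw [hb, hrange, Finset.sum_insert (by simp), hIccIoc]
  simp only [pow_zero, one_mul, Nat.choose_zero_right, Nat.cast_one, mul_one, one_pow]
  rw [show ∀ A : ℝ, 1 - (1 + A) = -A by intro A; ring, ← Finset.sum_neg_distrib]
  apply Finset.sum_congr rfl
  intro n hn
  rw [hterm n, neg_pow, pow_succ]
  ring

lemma GG_bounds (N : ℕ) {y : ℝ} (hy : 0 ≤ y) : 0 ≤ GG N y ∧ GG N y ≤ 1 := by
  have ha := aa_pos N
  have he : Real.exp (-(aa N * y)) ≤ 1 := by
    rw [Real.exp_le_one_iff]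
    nlinarith
  have hepos : 0 < Real.exp (-(aa N * y)) := Real.exp_pos _
  unfold GG
  constructor
  · apply pow_nonneg; linarith
  · apply pow_le_one₀ (by linarith) (by linarith)

lemma BB_bounds (M : ℕ) {y : ℝ} (hy : 0 ≤ y) : 0 ≤ BB (M+1) y ∧ BB (M+1) y ≤ 1 := by
  rw [BB_eq]
  obtain ⟨h1, h2⟩ := GG_bounds (M+1) hy
  exact ⟨by linarith, by linarith⟩

lemma core_bound (M : ℕ) {y : ℝ} (hy : 0 ≤ y) :
    ((gammaMeasure ((M+1:ℕ):ℝ) 1) (Ici y)).toReal ≤ BB (M+1) y := by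
  rw [gamma_Ici M hy, BB_eq]
  have := alzer M y hy
  linarith

lemma continuous_BB (M : ℕ) : Continuous (BB (M+1)) := by
  unfold BB
  apply continuous_finset_sum
  intro n _
  fun_prop

/-- Let `X` be a gamma(N,1) random variable (`N` a positive integer) and `I ≥ 0` an
independent random variable. Then, with `a = (N!)^{-1/N}`, for any `c > 0`:
`Pr(X ≥ c·I) ≤ Σ_{n=1}^{N} C(N,n) (-1)^{n+1} E[exp(-a n c I)]`. -/
theorem prob_gamma_ge_le_binomial_bound {Ω : Type*} [MeasureSpace Ω]
    [IsProbabilityMeasure (ℙ : Measure Ω)]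
    (N : ℕ) (hN : 0 < N) (X I : Ω → ℝ) (hX : Measurable X) (hI : Measurable I)
    (hXgamma : Measure.map X ℙ = gammaMeasure N 1)
    (hInn : ∀ ω, 0 ≤ I ω) (hindep : IndepFun X I ℙ)
    (c : ℝ) (hc : 0 < c) :
    (ℙ {ω | c * I ω ≤ X ω}).toReal
      ≤ ∑ n ∈ Finset.Icc 1 N, (N.choose n : ℝ) * (-1 : ℝ) ^ (n + 1)
          * ∫ ω, Real.exp (-((N.factorial : ℝ) ^ (-(1 : ℝ) / N) * n * c * I ω)) ∂ℙ := by
  obtain ⟨M, rfl⟩ : ∃ M, N = M + 1 := ⟨N - 1, by omega⟩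
  set μ := gammaMeasure ((M+1:ℕ):ℝ) 1 with hμ_def
  set ν := Measure.map I ℙ with hν_def
  have hNpos : (0:ℝ) < ((M+1:ℕ):ℝ) := by positivity
  have hprobμ : IsProbabilityMeasure μ := isProbabilityMeasure_gammaMeasure hNpos one_pos
  have hprobν : IsProbabilityMeasure ν := Measure.isProbabilityMeasure_map hI.aemeasurable
  have hae : ∀ᵐ i ∂ν, 0 ≤ i := by
    rw [hν_def]
    refine (MeasureTheory.ae_map_iff hI.aemeasurable
      (measurableSet_le measurable_const measurable_id)).mpr ?_
    exact Filter.Eventually.of_forall hInn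
  have hms : MeasurableSet {p : ℝ × ℝ | c * p.1 ≤ p.2} :=
    measurableSet_le (measurable_fst.const_mul c) measurable_snd
  have hmap : Measure.map (fun ω => (I ω, X ω)) ℙ = ν.prod μ := by
    rw [← hXgamma, hν_def]
    exact (ProbabilityTheory.indepFun_iff_map_prod_eq_prod_map_map
      hI.aemeasurable hX.aemeasurable).mp hindep.symm
  have h1 : ℙ {ω | c * I ω ≤ X ω} = (ν.prod μ) {p : ℝ × ℝ | c * p.1 ≤ p.2} := by
    rw [← hmap, Measure.map_apply (hI.prodMk hX) hms]
    rfl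
  have h2 : (ν.prod μ) {p : ℝ × ℝ | c * p.1 ≤ p.2} = ∫⁻ i, μ (Ici (c * i)) ∂ν := by
    rw [Measure.prod_apply hms]
    apply lintegral_congr
    intro i
    have hpre : (Prod.mk i ⁻¹' {p : ℝ × ℝ | c * p.1 ≤ p.2}) = Ici (c * i) := by
      ext x
      simp [Set.mem_Ici]
    rw [hpre]
  have h3 : ∫⁻ i, μ (Ici (c * i)) ∂ν ≤ ∫⁻ i, ENNReal.ofReal (BB (M+1) (c * i)) ∂ν := by
    apply lintegral_mono_ae
    filter_upwards [hae] with i hi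
    have hci : 0 ≤ c * i := mul_nonneg hc.le hi
    calc μ (Ici (c * i)) = ENNReal.ofReal ((μ (Ici (c * i))).toReal) :=
          (ENNReal.ofReal_toReal (measure_ne_top μ _)).symm
      _ ≤ ENNReal.ofReal (BB (M+1) (c * i)) := ENNReal.ofReal_le_ofReal (core_bound M hci)
  have hBmeas : Measurable (fun i : ℝ => BB (M+1) (c * i)) :=
    (continuous_BB M).measurable.comp (measurable_id.const_mul c)
  have hBnonneg : ∀ᵐ i ∂ν, 0 ≤ BB (M+1) (c * i) := by
    filter_upwards [hae] with i hi
    exact (BB_bounds M (mul_nonneg hc.le hi)).1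
  have hBint : Integrable (fun i : ℝ => BB (M+1) (c * i)) ν := by
    apply Integrable.mono' (integrable_const (1:ℝ)) hBmeas.aestronglyMeasurable
    filter_upwards [hae] with i hi
    rw [Real.norm_eq_abs, abs_le]
    obtain ⟨hb1, hb2⟩ := BB_bounds M (mul_nonneg hc.le hi)
    exact ⟨by linarith, hb2⟩
  have h4 : ∫⁻ i, ENNReal.ofReal (BB (M+1) (c * i)) ∂ν
      = ENNReal.ofReal (∫ i, BB (M+1) (c * i) ∂ν) :=
    (MeasureTheory.ofReal_integral_eq_lintegral_ofReal hBint hBnonneg).symm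
  have hint_nonneg : 0 ≤ ∫ i, BB (M+1) (c * i) ∂ν := integral_nonneg_of_ae hBnonneg
  have hfinal : (ℙ {ω | c * I ω ≤ X ω}).toReal ≤ ∫ i, BB (M+1) (c * i) ∂ν := by
    have hchain : ℙ {ω | c * I ω ≤ X ω} ≤ ENNReal.ofReal (∫ i, BB (M+1) (c * i) ∂ν) := by
      rw [h1, h2]
      exact h3.trans (le_of_eq h4)
    have := ENNReal.toReal_mono ENNReal.ofReal_ne_top hchain
    rwa [ENNReal.toReal_ofReal hint_nonneg] at this
  have h5 : ∫ i, BB (M+1) (c * i) ∂ν = ∫ ω, BB (M+1) (c * I ω) ∂ℙ := by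
    rw [hν_def]
    exact integral_map hI.aemeasurable hBmeas.aestronglyMeasurable
  have hexp_int : ∀ n : ℕ, Integrable (fun ω => Real.exp (-(aa (M+1) * n * (c * I ω)))) ℙ := by
    intro n
    apply Integrable.mono' (integrable_const (1:ℝ))
    · apply Measurable.aestronglyMeasurable
      fun_prop
    · apply Filter.Eventually.of_forall
      intro ω
      rw [Real.norm_eq_abs, Real.abs_exp, Real.exp_le_one_iff, neg_nonpos]
      exact mul_nonneg (mul_nonneg (aa_pos (M+1)).le (Nat.cast_nonneg n))
        (mul_nonneg hc.le (hInn ω))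
  have h6 : ∫ ω, BB (M+1) (c * I ω) ∂ℙ
      = ∑ n ∈ Finset.Icc 1 (M+1), (((M+1).choose n : ℕ) : ℝ) * (-1 : ℝ) ^ (n + 1)
          * ∫ ω, Real.exp (-(aa (M+1) * n * c * I ω)) ∂ℙ := by
    unfold BB
    rw [MeasureTheory.integral_finset_sum _ (fun n _ => (hexp_int n).const_mul _)]
    apply Finset.sum_congr rfl
    intro n _
    have harg : (fun ω => Real.exp (-(aa (M+1) * n * (c * I ω))))
        = fun ω => Real.exp (-(aa (M+1) * n * c * I ω)) := by
      funext ω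
      congr 1
      ring
    rw [MeasureTheory.integral_const_mul, harg]
  have hres := hfinal.trans (le_of_eq (h5.trans h6))
  simpa only [aa] using hres
end
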